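/- Let ω be a finite positive Borel measure on (-∞, 0] with ∫_{(-∞,0)} |t| dω(t) = +∞. Then the limit as x → +∞ of ∫_{(-∞,0]} (1+tx)/(t-x) dω(t) is +∞. -/

import Mathlib

open MeasureTheory Set Filter

private lemma pointwise_bound (x M t : ℝ) (hx : 1 ≤ x) (hM : 0 < M) (ht : t ≤ 0) :
    x / (x + M) * min (-t) M - 1 / x ≤ (1 + t * x) / (t - x) := by
  have hx0 : (0:ℝ) < x := lt_of_lt_of_le one_pos hx
  have hxM : (0:ℝ) < x + M := by linarith
  have hxt : (0:ℝ) < x - t := by linarith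
  have htx : t - x ≠ 0 := by intro h; linarith
  rcases le_total (-t) M with h | h
  · rw [min_eq_left h]
    have key : (1 + t * x) / (t - x) - (x / (x + M) * (-t) - 1 / x)
        = ((-t) * (x ^ 2 * (M + t) + x + M)) / ((x - t) * ((x + M) * x)) := by
      field_simp
      ring
    have hnum : 0 ≤ ((-t) * (x ^ 2 * (M + t) + x + M)) / ((x - t) * ((x + M) * x)) := by
      apply div_nonneg
      · apply mul_nonneg (by linarith)
        have h1 : 0 ≤ x ^ 2 * (M + t) := mul_nonneg (sq_nonneg x) (by linarith)
        linarith
      · positivity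
    linarith [key ▸ hnum]
  · rw [min_eq_right h]
    have key : (1 + t * x) / (t - x) - (x / (x + M) * M - 1 / x)
        = ((-(t + M)) * x ^ 3 + (-t) * (x + M)) / ((x - t) * ((x + M) * x)) := by
      field_simp
      ring
    have hnum : 0 ≤ ((-(t + M)) * x ^ 3 + (-t) * (x + M)) / ((x - t) * ((x + M) * x)) := by
      apply div_nonneg
      · have h1 : 0 ≤ (-(t + M)) * x ^ 3 := mul_nonneg (by linarith) (by positivity)
        have h2 : 0 ≤ (-t) * (x + M) := mul_nonneg (by linarith) (by linarith)
        linarith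
      · positivity
    linarith [key ▸ hnum]

private lemma f_bound (x t : ℝ) (hx : 1 ≤ x) (ht : t ≤ 0) :
    |(1 + t * x) / (t - x)| ≤ x := by
  have hx0 : (0:ℝ) < x := lt_of_lt_of_le one_pos hx
  have hxt : t - x < 0 := by linarith
  rw [abs_le]
  constructor
  · rw [le_div_iff_of_neg hxt]
    nlinarith
  · rw [div_le_iff_of_neg hxt]
    nlinarith

private lemma f_integrable (ω : Measure ℝ) [IsFiniteMeasure ω] (x : ℝ) (hx : 1 ≤ x) :
    IntegrableOn (fun t => (1 + t * x) / (t - x)) (Iic 0) ω := by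
  have hmeas : Measurable fun t : ℝ => (1 + t * x) / (t - x) := by
    apply Measurable.div <;> measurability
  apply Integrable.mono' (integrable_const x) hmeas.aestronglyMeasurable.restrict
  rw [ae_restrict_iff' measurableSet_Iic]
  exact ae_of_all _ fun t ht => f_bound x t hx ht

private lemma g_integrable (ω : Measure ℝ) [IsFiniteMeasure ω] (c M d : ℝ) :
    IntegrableOn (fun t => c * min (-t) M - d) (Iic 0) ω := by
  apply Integrable.sub _ (integrable_const d)
  apply Integrable.const_mul
  have hmeas : Measurable fun t : ℝ => min (-t) M :=
    (measurable_id.neg).min measurable_const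
  apply Integrable.mono' (integrable_const |M|) hmeas.aestronglyMeasurable.restrict
  rw [ae_restrict_iff' measurableSet_Iic]
  refine ae_of_all _ fun t ht => ?_
  have h0 : (0:ℝ) ≤ -t := by simpa using ht
  rw [Real.norm_eq_abs]
  rcases le_total (-t) M with h | h
  · rw [min_eq_left h, abs_of_nonneg h0]
    exact h.trans (le_abs_self M)
  · rw [min_eq_right h]

theorem stmt_3 (ω : Measure ℝ) [IsFiniteMeasure ω] (hsupp : ω (Ioi 0) = 0)
    (hinf : ∫⁻ t in Iio (0 : ℝ), ENNReal.ofReal |t| ∂ω = ⊤) :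
    Tendsto (fun x : ℝ => ∫ t in Iic (0 : ℝ), (1 + t * x) / (t - x) ∂ω) atTop atTop := by
  set T := (ω (Iic (0:ℝ))).toReal with hTdef
  have hT0 : 0 ≤ T := ENNReal.toReal_nonneg
  have hJ : ∀ C : ℝ, ∃ M : ℝ, 0 < M ∧ C ≤ ∫ t in Iic (0:ℝ), min (-t) M ∂ω := by
    intro C
    have hmeas : ∀ n : ℕ, Measurable fun t : ℝ => ENNReal.ofReal (min (-t) (n:ℝ)) :=
      fun n => ((measurable_id.neg).min measurable_const).ennreal_ofReal
    have hmono : Monotone fun n : ℕ => fun t : ℝ => ENNReal.ofReal (min (-t) (n:ℝ)) := by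
      intro m n hmn t
      exact ENNReal.ofReal_le_ofReal (min_le_min le_rfl (Nat.cast_le.2 hmn))
    have hsup : (⨆ n : ℕ, ∫⁻ t in Iio (0:ℝ), ENNReal.ofReal (min (-t) (n:ℝ)) ∂ω)
        = ∫⁻ t in Iio (0:ℝ), ENNReal.ofReal |t| ∂ω := by
      rw [← lintegral_iSup (fun n => hmeas n) hmono]
      refine setLIntegral_congr_fun measurableSet_Iio (fun t ht => ?_)
      have ht' : t < 0 := ht
      rw [abs_of_neg ht']
      apply le_antisymm
      · exact iSup_le fun n => ENNReal.ofReal_le_ofReal (min_le_left _ _)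
      · obtain ⟨n, hn⟩ := exists_nat_ge (-t)
        exact le_iSup_of_le n (by rw [min_eq_left hn])
    have hlt : ENNReal.ofReal C
        < ⨆ n : ℕ, ∫⁻ t in Iio (0:ℝ), ENNReal.ofReal (min (-t) (n:ℝ)) ∂ω := by
      rw [hsup, hinf]; exact ENNReal.ofReal_lt_top
    obtain ⟨n, hn⟩ := lt_iSup_iff.1 hlt
    refine ⟨max (n:ℝ) 1, lt_of_lt_of_le one_pos (le_max_right _ _), ?_⟩
    set M := max (n:ℝ) 1 with hMdef
    have hM0 : (0:ℝ) < M := lt_of_lt_of_le one_pos (le_max_right _ _)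
    have h1 : ∫⁻ t in Iio (0:ℝ), ENNReal.ofReal (min (-t) (n:ℝ)) ∂ω
        ≤ ∫⁻ t in Iic (0:ℝ), ENNReal.ofReal (min (-t) M) ∂ω := by
      refine le_trans (lintegral_mono fun t =>
        ENNReal.ofReal_le_ofReal (min_le_min le_rfl (le_max_left _ _)))
        (lintegral_mono_set Iio_subset_Iic_self)
    have hfin : ∫⁻ t in Iic (0:ℝ), ENNReal.ofReal (min (-t) M) ∂ω < ⊤ := by
      calc ∫⁻ t in Iic (0:ℝ), ENNReal.ofReal (min (-t) M) ∂ω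
          ≤ ∫⁻ _ in Iic (0:ℝ), ENNReal.ofReal M ∂ω :=
            lintegral_mono fun t => ENNReal.ofReal_le_ofReal (min_le_right _ _)
        _ = ENNReal.ofReal M * ω (Iic 0) := by rw [setLIntegral_const]
        _ < ⊤ := ENNReal.mul_lt_top ENNReal.ofReal_lt_top (measure_lt_top ω _)
    have heq : ∫ t in Iic (0:ℝ), min (-t) M ∂ω
        = (∫⁻ t in Iic (0:ℝ), ENNReal.ofReal (min (-t) M) ∂ω).toReal := by
      rw [integral_eq_lintegral_of_nonneg_ae]
      · filter_upwards [ae_restrict_mem measurableSet_Iic] with t ht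
        simp only [Pi.zero_apply]
        exact le_min (by simpa using ht) hM0.le
      · exact ((measurable_id.neg).min measurable_const).aestronglyMeasurable.restrict
    rw [heq]
    calc C ≤ (ENNReal.ofReal C).toReal := by
          rw [ENNReal.toReal_ofReal']; exact le_max_left _ _
      _ ≤ _ := ENNReal.toReal_mono hfin.ne (le_trans hn.le h1)
  rw [tendsto_atTop]
  intro b
  obtain ⟨M, hM0, hJM⟩ := hJ (2 * (b + T + 1))
  set J := ∫ t in Iic (0:ℝ), min (-t) M ∂ω with hJdef
  have hJ0 : 0 ≤ J :=
    setIntegral_nonneg measurableSet_Iic fun t ht => le_min (by simpa using ht) hM0.le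
  filter_upwards [eventually_ge_atTop (max M 1)] with x hx
  have hx1 : 1 ≤ x := le_trans (le_max_right _ _) hx
  have hxM : M ≤ x := le_trans (le_max_left _ _) hx
  have hx0 : (0:ℝ) < x := lt_of_lt_of_le one_pos hx1
  have hxM0 : (0:ℝ) < x + M := by linarith
  have hmono : ∫ t in Iic (0:ℝ), (x / (x + M) * min (-t) M - 1 / x) ∂ω
      ≤ ∫ t in Iic (0:ℝ), (1 + t * x) / (t - x) ∂ω := by
    refine setIntegral_mono_on (g_integrable ω _ M _) (f_integrable ω x hx1)
      measurableSet_Iic fun t ht => pointwise_bound x M t hx1 hM0 ht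
  have hgi : IntegrableOn (fun t : ℝ => x / (x + M) * min (-t) M) (Iic 0) ω := by
    have := g_integrable ω (x / (x + M)) M 0
    simpa using this
  have hsplit : ∫ t in Iic (0:ℝ), (x / (x + M) * min (-t) M - 1 / x) ∂ω
      = x / (x + M) * J - T * (1 / x) := by
    rw [integral_sub hgi (integrable_const _), integral_const_mul, integral_const,
      smul_eq_mul, hJdef, hTdef, measureReal_restrict_apply_univ]; rfl
  have h1 : (1:ℝ)/2 ≤ x / (x + M) := by
    rw [le_div_iff₀ hxM0]; linarith
  have h2 : T * (1 / x) ≤ T := by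
    have hle : 1 / x ≤ 1 := by rw [div_le_one hx0]; exact hx1
    have hge : 0 ≤ 1 / x := by positivity
    nlinarith
  have h3 : J / 2 ≤ x / (x + M) * J := by nlinarith
  have : b ≤ x / (x + M) * J - T * (1 / x) := by linarith
  linarith [hmono, hsplit ▸ this]
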